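/- Let n = 2^r, σ ≥ 1, f > 0 integers and δ an integer with 0 ≤ δ < f. Set x = f + δ and suppose k ≤ δ·n/f + σ (over the rationals) with k ≥ 0. Then log₂(n + k) - log₂(x) ≤ log₂(n/f) + (σ/n)·log₂(e). -/

import Mathlib

theorem per_letter_redundancy_simplified (r σ f δ : ℕ) (n : ℕ) (hn : n = 2 ^ r)
    (hσ : 1 ≤ σ) (hf : 0 < f) (hδ : δ < f) (x : ℕ) (hx : x = f + δ)
    (k : ℝ) (hk0 : 0 ≤ k) (hk : k ≤ (δ : ℝ) * n / f + σ) :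
    Real.logb 2 ((n : ℝ) + k) - Real.logb 2 (x : ℝ) ≤
      Real.logb 2 ((n : ℝ) / f) + ((σ : ℝ) / n) * Real.logb 2 (Real.exp 1) := by
  have hn0 : (0:ℝ) < n := by
    have : 0 < n := hn ▸ Nat.pow_pos (by norm_num)
    exact_mod_cast this
  have hf0 : (0:ℝ) < f := by exact_mod_cast hf
  have hx0 : (0:ℝ) < x := by
    have : 0 < x := by omega
    exact_mod_cast this
  have hfx : (f:ℝ) ≤ x := by
    have : f ≤ x := by omega
    exact_mod_cast this
  have hσ0 : (0:ℝ) ≤ σ := by positivity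
  -- key numeric bound
  have h1 : (n:ℝ) + k ≤ ((n:ℝ)/f) * x * (1 + σ/n) := by
    have hxf : (x:ℝ) = f + δ := by exact_mod_cast congrArg Nat.cast hx
    rw [hxf]
    have h2 : (δ:ℝ) * n / f + σ = (δ:ℝ) * n / f + σ := rfl
    have h3 : ((n:ℝ)/f) * ((f:ℝ)+δ) * (1 + σ/n)
        = n + δ * n / f + σ * ((f:ℝ)+δ) / f := by
      field_simp
    rw [h3]
    have h4 : (σ:ℝ) ≤ σ * ((f:ℝ)+δ) / f := by
      rw [le_div_iff₀ hf0]
      nlinarith [Nat.cast_nonneg (α := ℝ) δ]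
    linarith
  have hpos : (0:ℝ) < (n:ℝ) + k := by linarith
  have hpos2 : (0:ℝ) < ((n:ℝ)/f) * x * (1 + σ/n) := by positivity
  have hlog1 : Real.logb 2 ((n:ℝ) + k) ≤ Real.logb 2 (((n:ℝ)/f) * x * (1 + σ/n)) :=
    Real.logb_le_logb_of_le (by norm_num) hpos h1
  have hsplit : Real.logb 2 (((n:ℝ)/f) * x * (1 + σ/n))
      = Real.logb 2 ((n:ℝ)/f) + Real.logb 2 (x:ℝ) + Real.logb 2 (1 + σ/n) := by
    rw [Real.logb_mul (by positivity) (by positivity),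
      Real.logb_mul (by positivity) (by positivity)]
  have hlog2 : Real.logb 2 (1 + (σ:ℝ)/n) ≤ ((σ:ℝ)/n) * Real.logb 2 (Real.exp 1) := by
    have he : Real.logb 2 (Real.exp 1) = 1 / Real.log 2 := by
      rw [Real.logb, Real.log_exp]
    rw [he, Real.logb]
    have hlt : Real.log (1 + (σ:ℝ)/n) ≤ (σ:ℝ)/n := by
      have := Real.log_le_sub_one_of_pos (x := 1 + (σ:ℝ)/n) (by positivity)
      linarith
    have hl2 : (0:ℝ) < Real.log 2 := Real.log_pos (by norm_num)
    rw [div_le_iff₀ hl2]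
    calc Real.log (1 + (σ:ℝ)/n) ≤ (σ:ℝ)/n := hlt
      _ = (σ:ℝ)/n * (1/Real.log 2) * Real.log 2 := by field_simp
  calc Real.logb 2 ((n:ℝ) + k) - Real.logb 2 (x:ℝ)
      ≤ Real.logb 2 ((n:ℝ)/f) + Real.logb 2 (1 + σ/n) := by
        rw [hsplit] at hlog1; linarith
    _ ≤ Real.logb 2 ((n:ℝ)/f) + ((σ:ℝ)/n) * Real.logb 2 (Real.exp 1) := by linarith
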